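/- Let k be a field with char(k)=0 or char(k)>d, V a finite-dimensional k-vector space, and Q ∈ k[V] a homogeneous form of degree d. Let Q̃ : V^d → k be the associated symmetric multilinear form Q̃(x_1,...,x_d) = Δ_{x_1}...Δ_{x_d} Q (so Q(x) = Q̃(x,...,x)/d!). Then rk_k(Q) ≤ prk_k(Q̃), i.e. if Q̃ can be written as a sum of r products R_i·S_i of multilinear forms in complementary nonempty subsets of the variables, then Q is a sum of r products of forms of positive degree. -/
import Mathlib


open scoped BigOperators

/-- A multilinear form has partition rank one if it factors as a product of two
multilinear forms on complementary nonempty subsets of the coordinates. -/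
def IsPartRankOne {k : Type*} [Field k] {d : ℕ} {V : Fin d → Type*}
    [∀ i, AddCommGroup (V i)] [∀ i, Module k (V i)]
    (P : MultilinearMap k V k) : Prop :=
  ∃ I : Set (Fin d), I.Nonempty ∧ Iᶜ.Nonempty ∧
    ∃ (R : MultilinearMap k (fun i : I => V i.1) k)
      (S : MultilinearMap k (fun j : ↥Iᶜ => V j.1) k),
      ∀ x : (∀ i, V i), P x = R (fun i => x i.1) * S (fun j => x j.1)

/-- `P` is a sum of `r` partition-rank-one multilinear forms. -/
def HasPrkDecomp {k : Type*} [Field k] {d : ℕ} {V : Fin d → Type*}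
    [∀ i, AddCommGroup (V i)] [∀ i, Module k (V i)]
    (P : MultilinearMap k V k) (r : ℕ) : Prop :=
  ∃ Q : Fin r → MultilinearMap k V k, (∀ i, IsPartRankOne (Q i)) ∧ P = ∑ i, Q i

/-- The polynomial obtained by restricting a multilinear form on `(Fin s → k)^ι` to the
diagonal. -/
noncomputable def diagPoly {k : Type*} [Field k] {ι : Type*} [Fintype ι] [DecidableEq ι] {s : ℕ}
    (P : MultilinearMap k (fun _ : ι => Fin s → k) k) : MvPolynomial (Fin s) k :=
  ∑ f : ι → Fin s, MvPolynomial.C (P (fun i => Pi.single (f i) 1)) * ∏ i, MvPolynomial.X (f i)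

lemma diagPoly_isHomogeneous {k : Type*} [Field k] {ι : Type*} [Fintype ι] [DecidableEq ι]
    {s : ℕ} (P : MultilinearMap k (fun _ : ι => Fin s → k) k) :
    (diagPoly P).IsHomogeneous (Fintype.card ι) := by
  apply MvPolynomial.IsHomogeneous.sum
  intro f _
  have h1 : (MvPolynomial.C (P (fun i => Pi.single (f i) 1)) :
      MvPolynomial (Fin s) k).IsHomogeneous 0 := MvPolynomial.isHomogeneous_C _ _
  have h2 : ((∏ i, MvPolynomial.X (f i)) : MvPolynomial (Fin s) k).IsHomogeneous
      (Fintype.card ι) := by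
    have := MvPolynomial.IsHomogeneous.prod (Finset.univ : Finset ι)
      (fun i => (MvPolynomial.X (f i) : MvPolynomial (Fin s) k)) (fun _ => 1)
      (fun i _ => MvPolynomial.isHomogeneous_X _ _)
    simpa using this
  simpa using h1.mul h2

lemma diagPoly_eval {k : Type*} [Field k] {ι : Type*} [Fintype ι] [DecidableEq ι]
    {s : ℕ} (P : MultilinearMap k (fun _ : ι => Fin s → k) k) (x : Fin s → k) :
    MvPolynomial.eval x (diagPoly P) = P (fun _ => x) := by
  have hx : x = ∑ j : Fin s, x j • (Pi.single j 1 : Fin s → k) := by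
    funext t
    simp [Pi.single_apply, Finset.sum_apply]
  calc MvPolynomial.eval x (diagPoly P)
      = ∑ f : ι → Fin s, P (fun i => Pi.single (f i) 1) * ∏ i, x (f i) := by
        simp [diagPoly]
    _ = ∑ f : ι → Fin s, P (fun i => x (f i) • (Pi.single (f i) 1 : Fin s → k)) := by
        refine Finset.sum_congr rfl fun f _ => ?_
        rw [P.map_smul_univ]
        simp [mul_comm, smul_eq_mul]
    _ = P (fun _ => ∑ j : Fin s, x j • (Pi.single j 1 : Fin s → k)) := by
        rw [P.map_sum (g := fun _ j => x j • (Pi.single j 1 : Fin s → k))]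
    _ = P (fun _ => x) := by rw [← hx]

lemma eval_eq_zero_aux {k : Type u} [Field k] [Finite k] {s : ℕ}
    (p : MvPolynomial (Fin s) k)
    (h : ∀ v : Fin s → k, MvPolynomial.eval v p = 0)
    (hdeg : p.totalDegree ≤ Nat.card k - 1) : p = 0 := by
  haveI := Fintype.ofFinite k
  let e : Fin s ≃ ULift.{u} (Fin s) := Equiv.ulift.symm
  have hrename : MvPolynomial.rename e p = 0 := by
    apply MvPolynomial.eq_zero_of_eval_eq_zero (K := k) (σ := ULift.{u} (Fin s))
    · intro v
      rw [MvPolynomial.eval_rename]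
      exact h _
    · apply MvPolynomial.restrictTotalDegree_le_restrictDegree
      rw [MvPolynomial.mem_restrictTotalDegree]
      calc (MvPolynomial.rename e p).totalDegree
          ≤ p.totalDegree := MvPolynomial.totalDegree_rename_le _ _
        _ ≤ Nat.card k - 1 := hdeg
        _ = Fintype.card k - 1 := by rw [Nat.card_eq_fintype_card]
  have := MvPolynomial.rename_injective (R := k) e e.injective
  apply this
  simpa using hrename

/-- if the associated symmetric multilinear form `Q̃` of a degree-`d` form `Q`
(char k = 0 or > d) is a sum of `r` partition-rank-one multilinear forms, then `Q` is a sum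
of `r` products `R_i * S_i` of forms of positive degree (< d). -/
theorem schmidt_rank_le_partition_rank {k : Type*} [Field k] (d s : ℕ) (hd : 1 < d)
    (hchar : ringChar k = 0 ∨ d < ringChar k)
    (Q : MvPolynomial (Fin s) k) (hQ : Q.IsHomogeneous d)
    (Qt : MultilinearMap k (fun _ : Fin d => Fin s → k) k)
    (hsymm : ∀ (σ : Equiv.Perm (Fin d)) (x : Fin d → Fin s → k),
      Qt (fun i => x (σ i)) = Qt x)
    (hrel : ∀ x : Fin s → k, Qt (fun _ => x) = (d.factorial : k) * MvPolynomial.eval x Q)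
    (r : ℕ) (hdec : HasPrkDecomp Qt r) :
    ∃ R S : Fin r → MvPolynomial (Fin s) k,
      (∀ i, ∃ e, 0 < e ∧ e < d ∧ (R i).IsHomogeneous e ∧ (S i).IsHomogeneous (d - e)) ∧
      Q = ∑ i, R i * S i := by
  classical
  obtain ⟨QQ, hQQ1, hQQ2⟩ := hdec
  choose I hI hIc R S hRS using hQQ1
  -- the factorial is invertible
  have hfac : (d.factorial : k) ≠ 0 := by
    rcases hchar with h0 | hp
    · haveI : CharP k 0 := ringChar.of_eq h0
      haveI : CharZero k := CharP.charP_to_charZero k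
      exact_mod_cast Nat.cast_ne_zero.2 d.factorial_ne_zero
    · haveI : CharP k (ringChar k) := ringChar.charP k
      have hprime : (ringChar k).Prime := by
        rcases CharP.char_is_prime_or_zero k (ringChar k) with h | h
        · exact h
        · omega
      rw [Ne, CharP.cast_eq_zero_iff k (ringChar k)]
      rw [hprime.dvd_factorial]
      omega
  set e : Fin r → ℕ := fun i => Fintype.card ↥(I i) with he
  have hcompl : ∀ i, Fintype.card ↥(I i)ᶜ = d - e i := by
    intro i
    rw [Fintype.card_compl_set]
    simp [he]
  have he_le : ∀ i, e i ≤ d := by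
    intro i
    have h := Fintype.card_le_of_injective (Subtype.val : ↥(I i) → Fin d)
      Subtype.val_injective
    rwa [Fintype.card_fin] at h
  have he_pos : ∀ i, 0 < e i := fun i =>
    Fintype.card_pos_iff.2 (hI i).to_subtype
  have he_lt : ∀ i, e i < d := by
    intro i
    have h1 : 0 < Fintype.card ↥(I i)ᶜ := Fintype.card_pos_iff.2 (hIc i).to_subtype
    rw [hcompl i] at h1
    omega
  refine ⟨fun i => MvPolynomial.C ((d.factorial : k)⁻¹) * diagPoly (R i),
    fun i => diagPoly (S i), ?_, ?_⟩
  · intro i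
    refine ⟨e i, he_pos i, he_lt i, ?_, ?_⟩
    · have h := (MvPolynomial.isHomogeneous_C (Fin s) ((d.factorial : k)⁻¹)).mul
        (diagPoly_isHomogeneous (R i))
      rwa [zero_add] at h
    · rw [← hcompl i]
      exact diagPoly_isHomogeneous (S i)
  · -- evaluation identity
    have heval : ∀ v : Fin s → k, MvPolynomial.eval v Q =
        MvPolynomial.eval v (∑ i, MvPolynomial.C ((d.factorial : k)⁻¹) * diagPoly (R i)
          * diagPoly (S i)) := by
      intro v
      have h1 : Qt (fun _ => v) = ∑ i, QQ i (fun _ => v) := by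
        rw [hQQ2]; simp
      have h2 : ∀ i, QQ i (fun _ => v) =
          R i (fun _ => v) * S i (fun _ => v) := fun i => hRS i (fun _ => v)
      rw [map_sum]
      have : ∀ i, MvPolynomial.eval v (MvPolynomial.C ((d.factorial : k)⁻¹) * diagPoly (R i)
          * diagPoly (S i)) = (d.factorial : k)⁻¹ * QQ i (fun _ => v) := by
        intro i
        rw [h2 i]
        simp [diagPoly_eval, mul_assoc]
      rw [Finset.sum_congr rfl fun i _ => this i, ← Finset.mul_sum, ← h1, hrel v]
      field_simp
    -- now upgrade to polynomial identity
    set T : MvPolynomial (Fin s) k :=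
      ∑ i, MvPolynomial.C ((d.factorial : k)⁻¹) * diagPoly (R i) * diagPoly (S i) with hT
    have hThom : T.IsHomogeneous d := by
      apply MvPolynomial.IsHomogeneous.sum
      intro i _
      have hri : (MvPolynomial.C ((d.factorial : k)⁻¹) * diagPoly (R i)).IsHomogeneous (e i) := by
        have h := (MvPolynomial.isHomogeneous_C (Fin s) ((d.factorial : k)⁻¹)).mul
          (diagPoly_isHomogeneous (R i))
        rwa [zero_add] at h
      have hsi : (diagPoly (S i)).IsHomogeneous (d - e i) := by
        rw [← hcompl i]; exact diagPoly_isHomogeneous (S i)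
      have := hri.mul hsi
      have hsum : e i + (d - e i) = d := by have := he_le i; omega
      rwa [hsum] at this
    have hD : Q - T = 0 := by
      rcases finite_or_infinite k with hfin | hinf
      · haveI := Fintype.ofFinite k
        haveI : CharP k (ringChar k) := ringChar.charP k
        have hcard : d < Nat.card k := by
          rw [Nat.card_eq_fintype_card]
          rcases hchar with h0 | hp
          · exfalso
            have : Fintype.card k ≠ 0 := Fintype.card_ne_zero
            have := CharP.char_ne_zero_of_finite k (ringChar k)
            omega
          · obtain ⟨n, hpr, hcard2⟩ := FiniteField.card k (ringChar k)
            have : ringChar k ≤ ringChar k ^ (n : ℕ) :=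
              Nat.le_self_pow (by positivity) _
            omega
        apply eval_eq_zero_aux
        · intro v
          have := heval v
          simp [this, hT]
        · have h1 := (hQ.sub hThom).totalDegree_le
          omega
      · apply sub_eq_zero_of_eq
        exact MvPolynomial.funext heval
    have := sub_eq_zero.1 hD
    rw [this, hT]
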